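/- arXiv:1104.5051 — 4 statements merged into one kernel-verified Lean document; each statement's English description precedes it below -/
import Mathlib

section
/- Let 0 → A → Bᵢ → Cᵢ → 0 (i = 1,2) be short exact sequences of abelian groups where each Cᵢ has no 2-torsion, and suppose given homomorphisms B₁ → B₂ and C₁ → C₂ commuting with the maps from A and the projections. Then the induced map B₁/2B₁ → C₁/2C₁ ⊕ B₂/2B₂ is injective. -/
/-- The doubling homomorphism `a ↦ a + a` of an abelian group. -/
def doubleHom (A : Type*) [AddCommGroup A] : A →+ A where
  toFun a := a + a
  map_zero' := by simp
  map_add' x y := by abel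

lemma doubleHom_le {A B : Type*} [AddCommGroup A] [AddCommGroup B] (f : A →+ B) :
    (doubleHom A).range ≤ ((doubleHom B).range.comap f) := by
  rintro x ⟨a, rfl⟩
  exact ⟨f a, by simp [doubleHom]⟩

/-- Abstract Lemma 4.3(c): given two short exact sequences `0 → A → Bᵢ → Cᵢ → 0`
with `Cᵢ` 2-torsion-free and compatible maps `g : B₁ → B₂`, `h : C₁ → C₂`, the induced
map `B₁/2 → C₁/2 ⊕ B₂/2` is injective. -/
theorem stmt2 {A B₁ C₁ B₂ C₂ : Type*} [AddCommGroup A] [AddCommGroup B₁] [AddCommGroup C₁]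
    [AddCommGroup B₂] [AddCommGroup C₂]
    (f₁ : A →+ B₁) (c₁ : B₁ →+ C₁) (f₂ : A →+ B₂) (c₂ : B₂ →+ C₂)
    (g : B₁ →+ B₂) (h : C₁ →+ C₂)
    (hf₁ : Function.Injective f₁) (hc₁ : Function.Surjective c₁) (hex₁ : f₁.range = c₁.ker)
    (hf₂ : Function.Injective f₂) (hc₂ : Function.Surjective c₂) (hex₂ : f₂.range = c₂.ker)
    (hC₁ : ∀ c : C₁, c + c = 0 → c = 0) (hC₂ : ∀ c : C₂, c + c = 0 → c = 0)
    (hcomm₁ : g.comp f₁ = f₂) (hcomm₂ : h.comp c₁ = c₂.comp g) :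
    Function.Injective
      (fun x : B₁ ⧸ (doubleHom B₁).range =>
        ((QuotientAddGroup.map (doubleHom B₁).range (doubleHom C₁).range c₁ (doubleHom_le c₁)) x,
         (QuotientAddGroup.map (doubleHom B₁).range (doubleHom B₂).range g (doubleHom_le g)) x)) := by

  have key : ∀ b : B₁, c₁ b ∈ (doubleHom C₁).range → g b ∈ (doubleHom B₂).range →
      b ∈ (doubleHom B₁).range := by
    intro b ⟨c, hc⟩ ⟨b₂', hb₂⟩
    obtain ⟨b', hb'⟩ := hc₁ c
    have hker : b - (b' + b') ∈ c₁.ker := by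
      simp [AddMonoidHom.mem_ker, map_sub, map_add, hb', ← hc, doubleHom]
    rw [← hex₁] at hker
    obtain ⟨a, ha⟩ := hker
    have hga : f₂ a = g b - (g b' + g b') := by
      rw [← hcomm₁]; simp [AddMonoidHom.comp_apply, ha, map_sub, map_add]
    set x := b₂' - g b' with hx
    have hfx : f₂ a = x + x := by
      rw [hga, ← hb₂]; simp [doubleHom, hx]; abel
    have hcx : c₂ x = 0 := by
      apply hC₂
      have : c₂ (f₂ a) = 0 := by
        have : f₂ a ∈ c₂.ker := by rw [← hex₂]; exact ⟨a, rfl⟩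
        exact this
      rw [hfx, map_add] at this
      exact this
    have : x ∈ f₂.range := by rw [hex₂]; exact hcx
    obtain ⟨a', ha'⟩ := this
    have haa : a = a' + a' := by
      apply hf₂
      rw [hfx, ← ha', map_add]
    refine ⟨b' + f₁ a', ?_⟩
    have : f₁ a = b - (b' + b') := ha
    simp [doubleHom, map_add]
    have hfa : f₁ (a' + a') = b - (b' + b') := by rw [← haa]; exact this
    rw [map_add] at hfa
    have := hfa
    abel_nf
    abel_nf at this
    linear_combination (norm := abel) this
  intro x y hxy
  obtain ⟨b, rfl⟩ := QuotientAddGroup.mk_surjective x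
  obtain ⟨b'', rfl⟩ := QuotientAddGroup.mk_surjective y
  simp only [Prod.mk.injEq, QuotientAddGroup.map_mk] at hxy
  rw [QuotientAddGroup.eq, QuotientAddGroup.eq] at hxy
  rw [QuotientAddGroup.eq]
  refine key _ ?_ ?_
  · have := hxy.1
    simpa [map_add, map_neg] using this
  · have := hxy.2
    simpa [map_add, map_neg] using this
end

section
/- In the setting of two short exact sequences 0 → A → B₁ → C₁ → 0 and 0 → A → B₂ → C₂ → 0 of abelian groups with C₁ and C₂ having no 2-torsion, and compatible maps g : B₁ → B₂, h : C₁ → C₂ as above: if b̄ ∈ B₂ and b ∈ B₁ satisfy [h(c₁(b))] = [c₂(b̄)] in C₂/2 (where cᵢ : Bᵢ → Cᵢ are the projections), then there exists b' ∈ B₁ with [c₁(b')] = [c₁(b)] in C₁/2 and [g(b')] = [b̄] in B₂/2. -/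
/-- Abstract Lemma 4.3(d): in the setting of two short exact sequences `0 → A → Bᵢ → Cᵢ → 0`
with `Cᵢ` 2-torsion-free and compatible maps `g, h`: if `b̄ ∈ B₂` and `b ∈ B₁` satisfy
`[h (c₁ b)] = [c₂ b̄]` in `C₂/2`, then there is `b' ∈ B₁` with `[c₁ b'] = [c₁ b]` in `C₁/2`
and `[g b'] = [b̄]` in `B₂/2`. -/
theorem stmt3 {A B₁ C₁ B₂ C₂ : Type*} [AddCommGroup A] [AddCommGroup B₁] [AddCommGroup C₁]
    [AddCommGroup B₂] [AddCommGroup C₂]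
    (f₁ : A →+ B₁) (c₁ : B₁ →+ C₁) (f₂ : A →+ B₂) (c₂ : B₂ →+ C₂)
    (g : B₁ →+ B₂) (h : C₁ →+ C₂)
    (hf₁ : Function.Injective f₁) (hc₁ : Function.Surjective c₁) (hex₁ : f₁.range = c₁.ker)
    (hf₂ : Function.Injective f₂) (hc₂ : Function.Surjective c₂) (hex₂ : f₂.range = c₂.ker)
    (hC₁ : ∀ c : C₁, c + c = 0 → c = 0) (hC₂ : ∀ c : C₂, c + c = 0 → c = 0)
    (hcomm₁ : g.comp f₁ = f₂) (hcomm₂ : h.comp c₁ = c₂.comp g)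
    (b : B₁) (bbar : B₂)
    (hbb : QuotientAddGroup.mk' (doubleHom C₂).range (h (c₁ b)) =
           QuotientAddGroup.mk' (doubleHom C₂).range (c₂ bbar)) :
    ∃ b' : B₁,
      QuotientAddGroup.mk' (doubleHom C₁).range (c₁ b') =
        QuotientAddGroup.mk' (doubleHom C₁).range (c₁ b) ∧
      QuotientAddGroup.mk' (doubleHom B₂).range (g b') =
        QuotientAddGroup.mk' (doubleHom B₂).range bbar := by
  rw [QuotientAddGroup.mk'_eq_mk'] at hbb
  obtain ⟨z, ⟨d, rfl⟩, hz⟩ := hbb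
  -- h (c₁ b) + (d + d) = c₂ bbar
  obtain ⟨e, he⟩ := hc₂ d
  have key : g b - (bbar - (e + e)) ∈ c₂.ker := by
    rw [AddMonoidHom.mem_ker]
    have := DFunLike.congr_fun hcomm₂ b
    simp only [AddMonoidHom.comp_apply] at this
    simp [map_sub, map_add, ← this, he, doubleHom] at hz ⊢
    linear_combination (norm := abel) hz
  rw [← hex₂] at key
  obtain ⟨a, ha⟩ := key
  refine ⟨b - f₁ a, ?_, ?_⟩
  · have : c₁ (f₁ a) = 0 := by
      rw [← AddMonoidHom.mem_ker, ← hex₁]; exact ⟨a, rfl⟩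
    rw [map_sub, this, sub_zero]
  · rw [QuotientAddGroup.mk'_eq_mk']
    refine ⟨e + e, ⟨e, rfl⟩, ?_⟩
    have hga : g (f₁ a) = f₂ a := DFunLike.congr_fun hcomm₁ a
    rw [map_sub, hga, ha]
    abel
end

section
/- The square formed by the maps B₁/2 → C₁/2, B₁/2 → B₂/2, B₂/2 → C₂/2, C₁/2 → C₂/2 (induced from two short exact sequences 0 → A → Bᵢ → Cᵢ → 0 with Cᵢ 2-torsion-free and compatible maps B₁ → B₂, C₁ → C₂) is cartesian: B₁/2 is the pullback (fiber product) of C₁/2 and B₂/2 over C₂/2. -/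
/-- The square `B₁/2 → C₁/2`, `B₁/2 → B₂/2`, `B₂/2 → C₂/2`, `C₁/2 → C₂/2` induced from two
short exact sequences `0 → A → Bᵢ → Cᵢ → 0` with `Cᵢ` 2-torsion-free and compatible maps is
cartesian: `B₁/2` is the fiber product of `C₁/2` and `B₂/2` over `C₂/2`, i.e. for every
compatible pair `(x, y)` there is a unique `b ∈ B₁/2` mapping to it. -/
theorem stmt4 {A B₁ C₁ B₂ C₂ : Type*} [AddCommGroup A] [AddCommGroup B₁] [AddCommGroup C₁]
    [AddCommGroup B₂] [AddCommGroup C₂]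
    (f₁ : A →+ B₁) (c₁ : B₁ →+ C₁) (f₂ : A →+ B₂) (c₂ : B₂ →+ C₂)
    (g : B₁ →+ B₂) (h : C₁ →+ C₂)
    (hf₁ : Function.Injective f₁) (hc₁ : Function.Surjective c₁) (hex₁ : f₁.range = c₁.ker)
    (hf₂ : Function.Injective f₂) (hc₂ : Function.Surjective c₂) (hex₂ : f₂.range = c₂.ker)
    (hC₁ : ∀ c : C₁, c + c = 0 → c = 0) (hC₂ : ∀ c : C₂, c + c = 0 → c = 0)
    (hcomm₁ : g.comp f₁ = f₂) (hcomm₂ : h.comp c₁ = c₂.comp g) :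
    ∀ (x : C₁ ⧸ (doubleHom C₁).range) (y : B₂ ⧸ (doubleHom B₂).range),
      (QuotientAddGroup.map (doubleHom C₁).range (doubleHom C₂).range h (doubleHom_le h)) x =
        (QuotientAddGroup.map (doubleHom B₂).range (doubleHom C₂).range c₂ (doubleHom_le c₂)) y →
      ∃! b : B₁ ⧸ (doubleHom B₁).range,
        (QuotientAddGroup.map (doubleHom B₁).range (doubleHom C₁).range c₁ (doubleHom_le c₁)) b = x ∧
        (QuotientAddGroup.map (doubleHom B₁).range (doubleHom B₂).range g (doubleHom_le g)) b = y := by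
  -- uniqueness core: if c₁ u and g u are doubles, then u is a double
  have key : ∀ u : B₁, c₁ u ∈ (doubleHom C₁).range → g u ∈ (doubleHom B₂).range →
      u ∈ (doubleHom B₁).range := by
    intro u ⟨c, hc⟩ ⟨v, hv⟩
    simp only [doubleHom, AddMonoidHom.coe_mk, ZeroHom.coe_mk] at hc hv
    obtain ⟨b', hb'⟩ := hc₁ c
    have hker : u - (b' + b') ∈ c₁.ker := by
      simp [AddMonoidHom.mem_ker, map_sub, map_add, hb', ← hc]
    rw [← hex₁] at hker
    obtain ⟨a, ha⟩ := hker
    have hfa : f₂ a = g u - (g b' + g b') := by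
      have := DFunLike.congr_fun hcomm₁ a
      simp only [AddMonoidHom.comp_apply] at this
      rw [← this, ha]
      simp [map_sub, map_add]
    have hfa2 : f₂ a = (v - g b') + (v - g b') := by
      rw [hfa, ← hv]; abel
    have hfa0 : c₂ (f₂ a) = 0 := AddMonoidHom.mem_ker.mp (hex₂ ▸ ⟨a, rfl⟩)
    have hc2 : v - g b' ∈ c₂.ker := by
      apply AddMonoidHom.mem_ker.mpr
      apply hC₂
      rw [← map_add, ← hfa2, hfa0]
    rw [← hex₂] at hc2
    obtain ⟨a', ha'⟩ := hc2
    have haa : a = a' + a' := hf₂ (by rw [hfa2, map_add, ha'])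
    have h3 : f₁ a' + f₁ a' = u - (b' + b') := by rw [← map_add, ← haa, ha]
    refine ⟨b' + f₁ a', ?_⟩
    simp only [doubleHom, AddMonoidHom.coe_mk, ZeroHom.coe_mk]
    rw [show b' + f₁ a' + (b' + f₁ a') = (b' + b') + (f₁ a' + f₁ a') by abel, h3]
    abel
  intro x y hxy
  obtain ⟨c, rfl⟩ := QuotientAddGroup.mk_surjective x
  obtain ⟨b₂, rfl⟩ := QuotientAddGroup.mk_surjective y
  rw [QuotientAddGroup.map_mk, QuotientAddGroup.map_mk,
    QuotientAddGroup.eq_iff_sub_mem] at hxy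
  obtain ⟨z, hz⟩ := hxy
  simp only [doubleHom, AddMonoidHom.coe_mk, ZeroHom.coe_mk] at hz
  obtain ⟨w, hw⟩ := hc₂ z
  obtain ⟨b₁, hb₁⟩ := hc₁ c
  have hcb₁ : c₂ (g b₁) = h c := by
    have := DFunLike.congr_fun hcomm₂ b₁
    simp only [AddMonoidHom.comp_apply] at this
    rw [← this, hb₁]
  have hker : g b₁ - b₂ - (w + w) ∈ c₂.ker := by
    simp only [AddMonoidHom.mem_ker, map_sub, map_add, hw, hcb₁]
    rw [hz]; abel
  rw [← hex₂] at hker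
  obtain ⟨a, ha⟩ := hker
  set b := b₁ - f₁ a with hbdef
  have hx : (QuotientAddGroup.map (doubleHom B₁).range (doubleHom C₁).range c₁
      (doubleHom_le c₁)) (QuotientAddGroup.mk b) = QuotientAddGroup.mk c := by
    rw [QuotientAddGroup.map_mk]
    congr 1
    have h0 : c₁ (f₁ a) = 0 := AddMonoidHom.mem_ker.mp (hex₁ ▸ ⟨a, rfl⟩)
    rw [map_sub, h0, sub_zero, hb₁]
  have hy : (QuotientAddGroup.map (doubleHom B₁).range (doubleHom B₂).range g
      (doubleHom_le g)) (QuotientAddGroup.mk b) = QuotientAddGroup.mk b₂ := by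
    rw [QuotientAddGroup.map_mk, QuotientAddGroup.eq_iff_sub_mem]
    refine ⟨w, ?_⟩
    simp only [doubleHom, AddMonoidHom.coe_mk, ZeroHom.coe_mk]
    have hga : g (f₁ a) = f₂ a := by
      have := DFunLike.congr_fun hcomm₁ a
      simpa only [AddMonoidHom.comp_apply] using this
    rw [hbdef, map_sub, hga, ha]; abel
  refine ⟨QuotientAddGroup.mk b, ⟨hx, hy⟩, ?_⟩
  intro b' ⟨h1, h2⟩
  obtain ⟨u, rfl⟩ := QuotientAddGroup.mk_surjective b'
  rw [QuotientAddGroup.eq_iff_sub_mem]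
  apply key
  · have := h1.trans hx.symm
    rw [QuotientAddGroup.map_mk, QuotientAddGroup.map_mk,
      QuotientAddGroup.eq_iff_sub_mem] at this
    rwa [map_sub]
  · have := h2.trans hy.symm
    rw [QuotientAddGroup.map_mk, QuotientAddGroup.map_mk,
      QuotientAddGroup.eq_iff_sub_mem] at this
    rwa [map_sub]
end

section
/- Let R be a commutative ring and L an invertible R-module. Then tensoring with L induces, for any invertible modules L₁, L₂, a bijection between isomorphism classes of alignments L₁ ⤳ L₂ and isomorphism classes of alignments L ⊗ L₁ ⤳ L ⊗ L₂. -/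
open TensorProduct

/-- A (quadratic) alignment from an invertible module `L₁` to an invertible module `L₂` over a
commutative ring `R`: an invertible module `M` (with inverse `N`) together with an isomorphism
`φ : M ⊗ M ⊗ L₁ ≅ L₂`. -/
structure QAlignment (R L₁ L₂ : Type) [CommRing R]
    [AddCommGroup L₁] [Module R L₁] [AddCommGroup L₂] [Module R L₂] where
  M : Type
  [iM : AddCommGroup M]
  [mM : Module R M]
  N : Type
  [iN : AddCommGroup N]
  [mN : Module R N]
  invOf : (TensorProduct R M N) ≃ₗ[R] R
  phi : (TensorProduct R (TensorProduct R M M) L₁) ≃ₗ[R] L₂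

attribute [instance] QAlignment.iM QAlignment.mM QAlignment.iN QAlignment.mN

/-- Isomorphism of alignments (Definition 1.2). -/
def QAlignIso {R L₁ L₂ : Type} [CommRing R]
    [AddCommGroup L₁] [Module R L₁] [AddCommGroup L₂] [Module R L₂]
    (A A' : QAlignment R L₁ L₂) : Prop :=
  ∃ τ : A.M ≃ₗ[R] A'.M,
    A'.phi.toLinearMap.comp
        (TensorProduct.congr (TensorProduct.congr τ τ) (LinearEquiv.refl R L₁)).toLinearMap =
      A.phi.toLinearMap

/-- Tensoring an alignment `(M, φ) : L₁ ⤳ L₂` with a module `L`, producing the alignment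
`(M, id_L ⊗ φ ∘ (associativity/commutativity)) : L ⊗ L₁ ⤳ L ⊗ L₂`. -/
noncomputable def tensorQAlign (R L L₁ L₂ : Type) [CommRing R]
    [AddCommGroup L] [Module R L]
    [AddCommGroup L₁] [Module R L₁] [AddCommGroup L₂] [Module R L₂]
    (A : QAlignment R L₁ L₂) :
    QAlignment R (TensorProduct R L L₁) (TensorProduct R L L₂) where
  M := A.M
  N := A.N
  invOf := A.invOf
  phi := (TensorProduct.leftComm R (TensorProduct R A.M A.M) L L₁).trans
      (TensorProduct.congr (LinearEquiv.refl R L) A.phi)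

section Aux

variable {R L NL : Type} [CommRing R] [AddCommGroup L] [Module R L]
  [AddCommGroup NL] [Module R NL]
  (e : TensorProduct R L NL ≃ₗ[R] R)

/-- contraction `NL ⊗ (L ⊗ P) ≃ P` -/
noncomputable def epsE (P : Type) [AddCommGroup P] [Module R P] :
    TensorProduct R NL (TensorProduct R L P) ≃ₗ[R] P :=
  (TensorProduct.assoc R NL L P).symm ≪≫ₗ
    TensorProduct.congr ((TensorProduct.comm R NL L) ≪≫ₗ e) (LinearEquiv.refl R P) ≪≫ₗ
    TensorProduct.lid R P

@[simp] lemma epsE_tmul (P : Type) [AddCommGroup P] [Module R P] (n : NL) (l : L) (p : P) :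
    epsE e P (n ⊗ₜ[R] (l ⊗ₜ[R] p)) = e (l ⊗ₜ[R] n) • p := by
  simp [epsE]

/-- contraction `L ⊗ (NL ⊗ Q) ≃ Q` -/
noncomputable def etaE (Q : Type) [AddCommGroup Q] [Module R Q] :
    TensorProduct R L (TensorProduct R NL Q) ≃ₗ[R] Q :=
  (TensorProduct.assoc R L NL Q).symm ≪≫ₗ
    TensorProduct.congr e (LinearEquiv.refl R Q) ≪≫ₗ TensorProduct.lid R Q

@[simp] lemma etaE_tmul (Q : Type) [AddCommGroup Q] [Module R Q] (l : L) (n : NL) (q : Q) :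
    etaE e Q (l ⊗ₜ[R] (n ⊗ₜ[R] q)) = e (l ⊗ₜ[R] n) • q := by
  simp [etaE]

lemma congr_refl_lTensor {X A B : Type} [AddCommGroup X] [Module R X]
    [AddCommGroup A] [Module R A] [AddCommGroup B] [Module R B] (f : A ≃ₗ[R] B) :
    (TensorProduct.congr (LinearEquiv.refl R X) f).toLinearMap
      = LinearMap.lTensor X f.toLinearMap := by
  apply TensorProduct.ext'
  intro x a
  simp

variable {P Q X : Type} [AddCommGroup P] [Module R P] [AddCommGroup Q] [Module R Q]
  [AddCommGroup X] [Module R X]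

/-- tensoring a map with `L` -/
noncomputable def TopE (p : TensorProduct R X P →ₗ[R] Q) :
    TensorProduct R X (TensorProduct R L P) →ₗ[R] TensorProduct R L Q :=
  (LinearMap.lTensor L p).comp (TensorProduct.leftComm R X L P).toLinearMap

/-- "untensoring" a map using `NL` -/
noncomputable def SopE (q : TensorProduct R X (TensorProduct R L P) →ₗ[R] TensorProduct R L Q) :
    TensorProduct R X P →ₗ[R] Q :=
  (epsE e Q).toLinearMap.comp
    ((LinearMap.lTensor NL q).comp
      ((TensorProduct.congr (LinearEquiv.refl R X) (epsE e P).symm) ≪≫ₗ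
        TensorProduct.leftComm R X NL (TensorProduct R L P)).toLinearMap)

lemma SopE_TopE (p : TensorProduct R X P →ₗ[R] Q) : SopE e (TopE (L := L) p) = p := by
  rw [← LinearMap.cancel_right
    (TensorProduct.congr (LinearEquiv.refl R X) (epsE e P)).surjective]
  apply TensorProduct.ext'
  intro x w
  induction w using TensorProduct.induction_on with
  | zero => simp
  | tmul n w =>
    induction w using TensorProduct.induction_on with
    | zero => simp [TensorProduct.tmul_zero]
    | tmul l t =>
      simp only [LinearMap.comp_apply, LinearEquiv.coe_coe, TensorProduct.congr_tmul,
        LinearEquiv.refl_apply, SopE, LinearEquiv.trans_apply]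
      simp only [TensorProduct.congr_tmul, LinearEquiv.refl_apply,
        LinearEquiv.symm_apply_apply, TensorProduct.leftComm_tmul, LinearMap.lTensor_tmul]
      simp only [TopE, LinearMap.comp_apply, LinearEquiv.coe_coe,
        TensorProduct.leftComm_tmul, LinearMap.lTensor_tmul, epsE_tmul]
      rw [TensorProduct.tmul_smul, map_smul]
    | add w₁ w₂ h1 h2 =>
      simp only [TensorProduct.tmul_add, map_add] at *
      rw [h1, h2]
  | add w₁ w₂ h1 h2 =>
    simp only [TensorProduct.tmul_add, map_add] at *
    rw [h1, h2]

lemma etaE_nat {A B : Type} [AddCommGroup A] [Module R A] [AddCommGroup B] [Module R B]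
    (f : A →ₗ[R] B) :
    (etaE e B).toLinearMap.comp (LinearMap.lTensor L (LinearMap.lTensor NL f))
      = f.comp (etaE e A).toLinearMap := by
  apply TensorProduct.ext'
  intro l w
  induction w using TensorProduct.induction_on with
  | zero => simp [TensorProduct.tmul_zero]
  | tmul n a => simp [map_smul]
  | add w₁ w₂ h1 h2 =>
    simp only [TensorProduct.tmul_add, map_add] at *
    rw [h1, h2]

include e in
lemma lTensor_injective {A B : Type} [AddCommGroup A] [Module R A] [AddCommGroup B] [Module R B]
    {f g : A →ₗ[R] B} (h : LinearMap.lTensor NL f = LinearMap.lTensor NL g) : f = g := by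
  have h2 : LinearMap.lTensor L (LinearMap.lTensor NL f)
      = LinearMap.lTensor L (LinearMap.lTensor NL g) := by rw [h]
  have hf := etaE_nat e f
  have hg := etaE_nat e g
  rw [h2, hg] at hf
  exact ((LinearMap.cancel_right (etaE e A).surjective).mp hf).symm

lemma SopE_injective
    {q q' : TensorProduct R X (TensorProduct R L P) →ₗ[R] TensorProduct R L Q}
    (h : SopE e q = SopE e q') : q = q' := by
  apply lTensor_injective e (NL := NL)
  unfold SopE at h
  have h1 := (LinearMap.cancel_left (f := (epsE e Q).toLinearMap)
    (epsE e Q).injective).mp h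
  exact (LinearMap.cancel_right
    ((TensorProduct.congr (LinearEquiv.refl R X) (epsE e P).symm) ≪≫ₗ
      TensorProduct.leftComm R X NL (TensorProduct R L P)).surjective).mp h1

lemma TopE_SopE (q : TensorProduct R X (TensorProduct R L P) →ₗ[R] TensorProduct R L Q) :
    TopE (L := L) (SopE e q) = q :=
  SopE_injective e (SopE_TopE e (SopE e q))


@[simp] lemma congr_refl_apply {X A B : Type} [AddCommGroup X] [Module R X]
    [AddCommGroup A] [Module R A] [AddCommGroup B] [Module R B] (f : A ≃ₗ[R] B)
    (w : TensorProduct R X A) :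
    TensorProduct.congr (LinearEquiv.refl R X) f w = LinearMap.lTensor X f.toLinearMap w :=
  DFunLike.congr_fun (congr_refl_lTensor f) w

/-- The alignment `(M, φ) : L ⊗ P ⤳ L ⊗ Q` untensored to an alignment `P ⤳ Q`. -/
@[reducible] noncomputable def GdefE (B : QAlignment R (TensorProduct R L P) (TensorProduct R L Q)) :
    QAlignment R P Q where
  M := B.M
  N := B.N
  invOf := B.invOf
  phi := (TensorProduct.congr (LinearEquiv.refl R (TensorProduct R B.M B.M)) (epsE e P).symm) ≪≫ₗ
    TensorProduct.leftComm R (TensorProduct R B.M B.M) NL (TensorProduct R L P) ≪≫ₗ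
    TensorProduct.congr (LinearEquiv.refl R NL) B.phi ≪≫ₗ epsE e Q

lemma GdefE_phi (B : QAlignment R (TensorProduct R L P) (TensorProduct R L Q)) :
    (GdefE e (P := P) (Q := Q) B).phi.toLinearMap = SopE e B.phi.toLinearMap := by
  apply LinearMap.ext; intro z
  simp [GdefE, SopE, LinearEquiv.trans_apply]

lemma Tphi_eq (A : QAlignment R P Q) :
    (tensorQAlign R L P Q A).phi.toLinearMap = TopE (L := L) A.phi.toLinearMap := by
  apply LinearMap.ext; intro z
  simp [tensorQAlign, TopE, LinearEquiv.trans_apply]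
  rfl

lemma claimC (A : QAlignment R P Q) :
    (GdefE e (tensorQAlign R L P Q A)).phi.toLinearMap = A.phi.toLinearMap := by
  rw [GdefE_phi, Tphi_eq]
  exact SopE_TopE e _

lemma claimD (B : QAlignment R (TensorProduct R L P) (TensorProduct R L Q)) :
    (tensorQAlign R L P Q (GdefE e (P := P) (Q := Q) B)).phi.toLinearMap
      = B.phi.toLinearMap := by
  rw [Tphi_eq, GdefE_phi, TopE_SopE]

lemma isoC (A : QAlignment R P Q) :
    QAlignIso (GdefE e (tensorQAlign R L P Q A)) A := by
  refine ⟨LinearEquiv.refl R A.M, ?_⟩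
  apply TensorProduct.ext_threefold
  intro m m' t
  have h := DFunLike.congr_fun (claimC e A) ((m ⊗ₜ[R] m') ⊗ₜ[R] t)
  simp only [LinearMap.comp_apply, LinearEquiv.coe_coe, TensorProduct.congr_tmul,
    LinearEquiv.refl_apply] at h ⊢
  exact h.symm

lemma isoD (B : QAlignment R (TensorProduct R L P) (TensorProduct R L Q)) :
    QAlignIso (tensorQAlign R L P Q (GdefE e (P := P) (Q := Q) B)) B := by
  refine ⟨LinearEquiv.refl R B.M, ?_⟩
  apply TensorProduct.ext_threefold
  intro m m' t
  have h := DFunLike.congr_fun (claimD e B) ((m ⊗ₜ[R] m') ⊗ₜ[R] t)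
  simp only [LinearMap.comp_apply, LinearEquiv.coe_coe, TensorProduct.congr_tmul,
    LinearEquiv.refl_apply] at h ⊢
  exact h.symm

lemma isoA {A A' : QAlignment R P Q} (h : QAlignIso A A') :
    QAlignIso (tensorQAlign R L P Q A) (tensorQAlign R L P Q A') := by
  obtain ⟨τ, hτ⟩ := h
  refine ⟨τ, ?_⟩
  apply TensorProduct.ext'
  intro u w
  have hh : ∀ v : TensorProduct R (TensorProduct R A.M A.M) P,
      A'.phi ((TensorProduct.congr (TensorProduct.congr τ τ) (LinearEquiv.refl R P)) v)
        = A.phi v := fun v => DFunLike.congr_fun hτ v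
  induction w using TensorProduct.induction_on with
  | zero => simp [TensorProduct.tmul_zero]
  | tmul l t =>
    simp only [LinearMap.comp_apply, LinearEquiv.coe_coe, TensorProduct.congr_tmul,
      LinearEquiv.refl_apply, tensorQAlign, LinearEquiv.trans_apply,
      TensorProduct.leftComm_tmul]
    exact congrArg (fun v => l ⊗ₜ[R] v) (hh (u ⊗ₜ[R] t))
  | add w₁ w₂ h1 h2 =>
    simp only [TensorProduct.tmul_add, map_add] at *
    rw [h1, h2]

lemma isoB {B B' : QAlignment R (TensorProduct R L P) (TensorProduct R L Q)}
    (h : QAlignIso B B') :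
    QAlignIso (GdefE e (P := P) (Q := Q) B) (GdefE e (P := P) (Q := Q) B') := by
  obtain ⟨τ, hτ⟩ := h
  refine ⟨τ, ?_⟩
  have hh : ∀ v, B'.phi ((TensorProduct.congr (TensorProduct.congr τ τ)
      (LinearEquiv.refl R (TensorProduct R L P))) v) = B.phi v :=
    fun v => DFunLike.congr_fun hτ v
  rw [← LinearMap.cancel_right
    (TensorProduct.congr (LinearEquiv.refl R (TensorProduct R B.M B.M)) (epsE e P)).surjective]
  apply TensorProduct.ext'
  intro u w
  induction w using TensorProduct.induction_on with
  | zero => simp [TensorProduct.tmul_zero]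
  | tmul n v =>
    simp only [LinearMap.comp_apply, LinearEquiv.coe_coe, TensorProduct.congr_tmul,
      LinearEquiv.refl_apply, GdefE, LinearEquiv.trans_apply,
      LinearEquiv.symm_apply_apply, TensorProduct.leftComm_tmul]
    rw [← hh (u ⊗ₜ[R] v)]
    simp
  | add w₁ w₂ h1 h2 =>
    simp only [TensorProduct.tmul_add, map_add] at *
    rw [h1, h2]

end Aux


/-- Lemma 1.6: if `L` is an invertible `R`-module, then tensoring with `L` induces a bijection
between isomorphism classes of alignments `L₁ ⤳ L₂` and isomorphism classes of alignments
`L ⊗ L₁ ⤳ L ⊗ L₂`. -/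
theorem stmt8 (R L L₁ L₂ : Type) [CommRing R]
    [AddCommGroup L] [Module R L]
    [AddCommGroup L₁] [Module R L₁] [AddCommGroup L₂] [Module R L₂]
    (NL : Type) [AddCommGroup NL] [Module R NL]
    (hL : Nonempty ((TensorProduct R L NL) ≃ₗ[R] R)) :
    ∃ F : Quot (QAlignIso (R := R) (L₁ := L₁) (L₂ := L₂)) →
        Quot (QAlignIso (R := R) (L₁ := TensorProduct R L L₁) (L₂ := TensorProduct R L L₂)),
      (∀ A : QAlignment R L₁ L₂,
          F (Quot.mk _ A) = Quot.mk _ (tensorQAlign R L L₁ L₂ A)) ∧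
      Function.Bijective F := by
  obtain ⟨e⟩ := hL
  refine ⟨Quot.lift (fun A => Quot.mk _ (tensorQAlign R L L₁ L₂ A))
      (fun A A' h => Quot.sound (isoA (L := L) h)), fun A => rfl, ?_, ?_⟩
  · intro x y hxy
    induction x using Quot.ind with
    | mk A =>
    induction y using Quot.ind with
    | mk A' =>
    have h1 : Quot.mk _ (GdefE e (tensorQAlign R L L₁ L₂ A))
        = Quot.mk _ (GdefE e (tensorQAlign R L L₁ L₂ A')) :=
      congrArg (Quot.lift (fun B => Quot.mk _ (GdefE e (P := L₁) (Q := L₂) B))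
        (fun B B' h => Quot.sound (isoB e h))) hxy
    exact (Quot.sound (isoC e A)).symm.trans (h1.trans (Quot.sound (isoC e A')))
  · intro y
    induction y using Quot.ind with
    | mk B =>
    exact ⟨Quot.mk _ (GdefE e (P := L₁) (Q := L₂) B), Quot.sound (isoD e B)⟩
end
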